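/- arXiv:1110.6521 — 2 statements merged into one kernel-verified Lean document; each statement's English description precedes it below -/
import Mathlib

section
/- Let d ≥ 1 and let u ∈ L²(𝕋^d) have Fourier coefficients a : ℤ^d → ℂ with ‖u‖² = Σ_{k∈ℤ^d} |a_k|². Then Σ_{(l,s)∈ℤ^d×ℤ} |b_u(l,s)|^{d+1} ≤ 2^d · ‖u‖^{2(d+1)}. In particular there is a constant C_d > 0 (one may take C_d = 2^{d/(d+1)}) such that ‖b_u‖_{ℓ^{d+1}(ℤ^{d+1})} ≤ C_d ‖u‖²_{L²(𝕋^d)} for every u ∈ L²(𝕋^d). -/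
open scoped BigOperators
open Matrix

/-- The space-time Fourier coefficients of `|e^{itΔ}u|²`, where `a` are the Fourier
coefficients of `u`: `b_u(l,s) = Σ_{k : |k-l|²-|k|² = s} a_k conj(a_{k-l})`. -/
noncomputable def bcoef {d : ℕ} (a : (Fin d → ℤ) → ℂ) (l : Fin d → ℤ) (s : ℤ) : ℂ :=
  ∑' k : Fin d → ℤ,
    if (k - l) ⬝ᵥ (k - l) - k ⬝ᵥ k = s then a k * (starRingEnd ℂ) (a (k - l)) else 0

open scoped ENNReal NNReal
open Function

namespace AJM

noncomputable section
open Classical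

variable {d : ℕ}

def Qph (k l : Fin d → ℤ) : ℤ := (k - l) ⬝ᵥ (k - l) - k ⬝ᵥ k

lemma Qph_eq (k l : Fin d → ℤ) : Qph k l = l ⬝ᵥ l - (k ⬝ᵥ l + k ⬝ᵥ l) := by
  unfold Qph
  rw [sub_dotProduct, dotProduct_sub, dotProduct_sub,
    dotProduct_comm l k]
  ring

lemma Qph_eq_iff (k k' l : Fin d → ℤ) : Qph k l = Qph k' l ↔ (k - k') ⬝ᵥ l = 0 := by
  rw [Qph_eq, Qph_eq, sub_dotProduct]
  omega

lemma tsum_pow_eq {α : Type*} (f : α → ℝ≥0∞) (n : ℕ) :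
    (∑' k, f k) ^ n = ∑' t : Fin n → α, ∏ j, f (t j) := by
  induction n with
  | zero =>
      have h : (fun t : Fin 0 → α => ∏ j, f (t j)) = fun _ => 1 := funext fun t => by simp
      rw [pow_zero, h]
      exact (tsum_eq_single (f := fun _ : Fin 0 → α => (1 : ℝ≥0∞)) (default : Fin 0 → α)
        (fun b hb => (hb (Subsingleton.elim b default)).elim)).symm
  | succ n ih =>
      have h1 : ∑' p : α × (Fin n → α), f p.1 * ∏ j, f (p.2 j)
          = (∑' k, f k) * (∑' t : Fin n → α, ∏ j, f (t j)) := by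
        calc ∑' p : α × (Fin n → α), f p.1 * ∏ j, f (p.2 j)
            = ∑' k, ∑' t : Fin n → α, f k * ∏ j, f (t j) :=
              ENNReal.tsum_prod (f := fun (k : α) (t : Fin n → α) => f k * ∏ j, f (t j))
          _ = ∑' k, f k * ∑' t : Fin n → α, ∏ j, f (t j) :=
              tsum_congr fun k => ENNReal.tsum_mul_left
          _ = _ := ENNReal.tsum_mul_right
      have h2 : ∑' u : Fin (n+1) → α, ∏ j, f (u j)
          = ∑' p : α × (Fin n → α), ∏ j, f ((Fin.cons p.1 p.2 : Fin (n+1) → α) j) :=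
        (Equiv.tsum_eq (Fin.consEquiv fun _ => α) (fun u => ∏ j, f (u j))).symm
      have h3 : ∀ p : α × (Fin n → α),
          (∏ j, f ((Fin.cons p.1 p.2 : Fin (n+1) → α) j)) = f p.1 * ∏ j, f (p.2 j) := by
        intro p
        rw [Fin.prod_univ_succ]
        simp
      rw [pow_succ, mul_comm, ih, h2, tsum_congr h3, h1]

lemma prod_ite_zero {n : ℕ} (P : Fin n → Prop) [DecidablePred P] (x : Fin n → ℝ≥0∞) :
    (∏ j, if P j then x j else 0) = if (∀ j, P j) then ∏ j, x j else 0 := by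
  by_cases h : ∀ j, P j
  · rw [if_pos h]; exact Finset.prod_congr rfl fun j _ => if_pos (h j)
  · rw [if_neg h]
    push_neg at h
    obtain ⟨j0, hj0⟩ := h
    exact Finset.prod_eq_zero (Finset.mem_univ j0) (if_neg hj0)

lemma two_mul_le_sq_add_sq (a b : ℝ≥0∞) : 2 * (a * b) ≤ a ^ 2 + b ^ 2 := by
  rcases eq_or_ne a ⊤ with ha | ha
  · rcases eq_or_ne b 0 with hb | hb
    · simp [ha, hb]
    · have h : a ^ 2 + b ^ 2 = ⊤ := by
        rw [ha]; simp [ENNReal.top_pow]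
      rw [h]; exact le_top
  · rcases eq_or_ne b ⊤ with hb | hb
    · rcases eq_or_ne a 0 with ha0 | ha0
      · simp [hb, ha0]
      · have h : a ^ 2 + b ^ 2 = ⊤ := by
          rw [hb]; simp [ENNReal.top_pow]
        rw [h]; exact le_top
    · lift a to ℝ≥0 using ha
      lift b to ℝ≥0 using hb
      have h := two_mul_le_add_sq (a : ℝ) (b : ℝ)
      have h2 : 2 * ((a : ℝ≥0) * b) ≤ (a : ℝ≥0) ^ 2 + b ^ 2 := by
        rw [← NNReal.coe_le_coe]
        push_cast
        nlinarith [h]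
      exact_mod_cast h2

def ratv (x : Fin d → ℤ) : Fin d → ℚ := fun j => (x j : ℚ)
lemma ratv_sub (x y : Fin d → ℤ) : ratv (x - y) = ratv x - ratv y := by funext j; simp [ratv]
lemma ratv_inj : Function.Injective (ratv (d := d)) := by
  intro x y h; funext j; have := congrFun h j; simpa [ratv] using this
lemma ratv_dot (x y : Fin d → ℤ) : (ratv x) ⬝ᵥ (ratv y) = ((x ⬝ᵥ y : ℤ) : ℚ) := by
  simp [ratv, dotProduct]
lemma dot_eq_zero_of_mem_span {s : Set (Fin d → ℚ)} {L : Fin d → ℚ}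
    (hs : ∀ y ∈ s, y ⬝ᵥ L = 0) {x : Fin d → ℚ} (hx : x ∈ Submodule.span ℚ s) :
    x ⬝ᵥ L = 0 := by
  induction hx using Submodule.span_induction with
  | mem y hy => exact hs y hy
  | zero => simp
  | add y z _ _ hy hz => rw [add_dotProduct, hy, hz, add_zero]
  | smul c y _ hy => rw [smul_dotProduct, hy, smul_zero]
lemma eq_zero_of_orth_greedy (δ : Fin d → (Fin d → ℚ)) 
    (hg : ∀ i : Fin d, δ i ∉ Submodule.span ℚ (δ '' {i' : Fin d | i'.val < i.val}))
    {L : Fin d → ℚ} (hL : ∀ i, δ i ⬝ᵥ L = 0) : L = 0 := by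
  set W : ℕ → Submodule ℚ (Fin d → ℚ) := fun m => Submodule.span ℚ (δ '' {i : Fin d | i.val < m}) with hW
  have hrank : ∀ m, m ≤ d → m ≤ Module.finrank ℚ (W m) := by
    intro m
    induction m with
    | zero => intro _; exact Nat.zero_le _
    | succ m ih =>
        intro hm
        have hmd : m < d := by omega
        have h1 : m ≤ Module.finrank ℚ (W m) := ih (by omega)
        set i : Fin d := ⟨m, hmd⟩ with hi
        have hle : W m ≤ W (m + 1) := by
          apply Submodule.span_mono
          apply Set.image_mono
          intro i' hi'
          simp only [Set.mem_setOf_eq] at hi' ⊢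
          omega
        have hmem : δ i ∈ W (m + 1) := by
          apply Submodule.subset_span
          exact ⟨i, by simp [hi], rfl⟩
        have hnmem : δ i ∉ W m := by
          have := hg i
          simpa [hW, hi] using this
        have hlt : W m < W (m + 1) := lt_of_le_of_ne hle (by
          intro h
          exact hnmem (h ▸ hmem))
        have := Submodule.finrank_lt_finrank_of_lt hlt
        omega
  have htop : W d = ⊤ := by
    apply Submodule.eq_top_of_finrank_eq
    have h1 : d ≤ Module.finrank ℚ (W d) := hrank d le_rfl
    have h2 : Module.finrank ℚ (W d) ≤ Module.finrank ℚ (Fin d → ℚ) := (W d).finrank_le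
    rw [Module.finrank_fin_fun] at h2 ⊢
    omega
  have hLW : L ∈ W d := htop ▸ Submodule.mem_top
  have : L ⬝ᵥ L = 0 := by
    apply dot_eq_zero_of_mem_span (s := δ '' {i : Fin d | i.val < d}) ?_ hLW
    rintro y ⟨i, _, rfl⟩
    exact hL i
  rwa [dotProduct_self_eq_zero] at this

def Cfg (d : ℕ) := (Fin d → ℤ) × (Fin (d + 1) → Fin d → ℤ)
def Alg (X : Cfg d) : Prop := ∀ j, (X.2 j - X.2 0) ⬝ᵥ X.1 = 0
def delv (X : Cfg d) : Fin d → (Fin d → ℚ) := fun i => ratv (X.2 i.succ) - ratv (X.2 0)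
def cls (X : Cfg d) : Finset (Fin d) :=
  Finset.univ.filter
    (fun i => delv X i ∉ Submodule.span ℚ (delv X '' {i' : Fin d | i'.val < i.val}))
lemma delv_dot_eq_zero {X : Cfg d} (hX : Alg X) (i : Fin d) :
    delv X i ⬝ᵥ ratv X.1 = 0 := by
  have : delv X i = ratv (X.2 i.succ - X.2 0) := by rw [ratv_sub]; rfl
  rw [this, ratv_dot, hX i.succ]; simp
/-- every difference vector lies in the span of the selected ones. -/
lemma delv_mem_span_cls (X : Cfg d) (j : Fin d) :
    delv X j ∈ Submodule.span ℚ (delv X '' ↑(cls X)) := by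
  have main : ∀ m : ℕ, ∀ j : Fin d, j.val < m →
      delv X j ∈ Submodule.span ℚ (delv X '' ↑(cls X)) := by
    intro m
    induction m with
    | zero => intro j hj; omega
    | succ m ih =>
        intro j hj
        by_cases hjm : j.val < m
        · exact ih j hjm
        · by_cases hmem : j ∈ cls X
          · exact Submodule.subset_span ⟨j, by simpa using hmem, rfl⟩
          · have hsp : delv X j ∈ Submodule.span ℚ (delv X '' {i' : Fin d | i'.val < j.val}) := by
              have := Finset.mem_filter.not.mp hmem
              simp only [Finset.mem_univ, true_and, not_not] at this
              exact this
            refine Submodule.span_le.mpr ?_ hsp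
            rintro y ⟨i, hi, rfl⟩
            simp only [Set.mem_setOf_eq] at hi
            exact ih i (by omega)
  exact main (j.val + 1) j (by omega)

lemma l_eq_zero_of_cls_univ {X : Cfg d} (hX : Alg X) (hT : cls X = Finset.univ) :
    X.1 = 0 := by
  have hg : ∀ i : Fin d, delv X i ∉ Submodule.span ℚ (delv X '' {i' : Fin d | i'.val < i.val}) := by
    intro i
    have : i ∈ cls X := hT ▸ Finset.mem_univ i
    have := Finset.mem_filter.mp this
    exact this.2
  have hL : ratv X.1 = 0 := eq_zero_of_orth_greedy (delv X) hg (fun i => delv_dot_eq_zero hX i)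
  have : ratv X.1 = ratv 0 := by rw [hL]; funext j; simp [ratv]
  exact ratv_inj this

def sideA (T : Finset (Fin d)) : Finset (Fin (d + 1)) :=
  if T = Finset.univ then T.map ⟨Fin.succ, Fin.succ_injective d⟩
  else insert 0 (T.map ⟨Fin.succ, Fin.succ_injective d⟩)
def PhiA (T : Finset (Fin d)) (X : Cfg d) : Fin (d + 1) → Fin d → ℤ :=
  fun j => if j ∈ sideA T then X.2 j else X.2 j - X.1
def PhiB (T : Finset (Fin d)) (X : Cfg d) : Fin (d + 1) → Fin d → ℤ :=
  fun j => if j ∈ sideA T then X.2 j - X.1 else X.2 j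
lemma zero_mem_sideA {T : Finset (Fin d)} (hT : T ≠ Finset.univ) : (0 : Fin (d+1)) ∈ sideA T := by
  rw [sideA, if_neg hT]; exact Finset.mem_insert_self _ _
lemma succ_mem_sideA {T : Finset (Fin d)} {i : Fin d} (hi : i ∈ T) : i.succ ∈ sideA T := by
  rw [sideA]; split
  · exact Finset.mem_map_of_mem _ hi
  · exact Finset.mem_insert_of_mem (Finset.mem_map_of_mem _ hi)
lemma succ_not_mem_sideA {T : Finset (Fin d)} {i : Fin d} (hi : i ∉ T) :
    i.succ ∉ sideA T := by
  rw [sideA]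
  have hmap : i.succ ∉ T.map ⟨Fin.succ, Fin.succ_injective d⟩ := by
    intro h
    rw [Finset.mem_map] at h
    obtain ⟨i', hi', h⟩ := h
    have : i' = i := Fin.succ_injective d h
    exact hi (this ▸ hi')
  split
  · exact hmap
  · intro h
    rcases Finset.mem_insert.mp h with h | h
    · exact (Fin.succ_ne_zero i) h
    · exact hmap h


-- now the real work:

lemma exists_not_mem {T : Finset (Fin d)} (hT : T ≠ Finset.univ) : ∃ i, i ∉ T := by
  by_contra h
  push_neg at h
  exact hT (Finset.eq_univ_iff_forall.mpr h)

/-- key uniqueness: common value of `l` recovered from shared data -/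
lemma l_unique {X X' : Cfg d} {T : Finset (Fin d)}
    (hX : Alg X) (hX' : Alg X') (hc : cls X = T) (hc' : cls X' = T)
    (hdel : ∀ i ∈ T, delv X i = delv X' i)
    (hmem : ratv X.1 - ratv X'.1 ∈ Submodule.span ℚ (delv X '' ↑T)) : X.1 = X'.1 := by
  set Lq := ratv X.1
  set Lq' := ratv X'.1
  have horthX : ∀ y ∈ delv X '' ↑T, y ⬝ᵥ Lq = 0 := by
    rintro y ⟨i, _, rfl⟩
    exact delv_dot_eq_zero hX i
  have horthX' : ∀ y ∈ delv X '' ↑T, y ⬝ᵥ Lq' = 0 := by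
    rintro y ⟨i, hi, rfl⟩
    rw [hdel i hi]
    exact delv_dot_eq_zero hX' i
  have h1 : (Lq - Lq') ⬝ᵥ Lq = 0 := dot_eq_zero_of_mem_span horthX hmem
  have h2 : (Lq - Lq') ⬝ᵥ Lq' = 0 := dot_eq_zero_of_mem_span horthX' hmem
  have h3 : (Lq - Lq') ⬝ᵥ (Lq - Lq') = 0 := by
    rw [dotProduct_sub, h1, h2, sub_zero]
  have h4 : Lq - Lq' = 0 := dotProduct_self_eq_zero.mp h3
  have h5 : Lq = Lq' := sub_eq_zero.mp h4
  exact ratv_inj h5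

lemma injA {T : Finset (Fin d)} {X X' : Cfg d}
    (hX : Alg X) (hX' : Alg X') (hc : cls X = T) (hc' : cls X' = T)
    (h : PhiA T X = PhiA T X') : X = X' := by
  by_cases hT : T = Finset.univ
  · -- in this class l = 0 on both sides, and all positions are the tuple points
    have hl : X.1 = 0 := l_eq_zero_of_cls_univ hX (hc.trans hT)
    have hl' : X'.1 = 0 := l_eq_zero_of_cls_univ hX' (hc'.trans hT)
    have ht : X.2 = X'.2 := by
      funext j
      have := congrFun h j
      by_cases hj : j ∈ sideA T
      · simpa [PhiA, hj] using this
      · simpa [PhiA, hj, hl, hl'] using this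
    exact Prod.ext (hl.trans hl'.symm) ht
  · have h0 : X.2 0 = X'.2 0 := by
      have := congrFun h 0
      simpa [PhiA, zero_mem_sideA hT] using this
    have hks : ∀ i ∈ T, X.2 i.succ = X'.2 i.succ := by
      intro i hi
      have := congrFun h i.succ
      simpa [PhiA, succ_mem_sideA hi] using this
    have hdel : ∀ i ∈ T, delv X i = delv X' i := by
      intro i hi
      unfold delv
      rw [hks i hi, h0]
    obtain ⟨j0, hj0⟩ := exists_not_mem hT
    have hcrossZ : X.2 j0.succ - X.1 = X'.2 j0.succ - X'.1 := by
      have := congrFun h j0.succ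
      simpa [PhiA, succ_not_mem_sideA hj0] using this
    have hcross : delv X j0 - ratv X.1 = delv X' j0 - ratv X'.1 := by
      have hq := congrArg ratv hcrossZ
      rw [ratv_sub, ratv_sub] at hq
      unfold delv
      rw [h0]
      linear_combination hq
    have himg : delv X '' ↑T = delv X' '' ↑T := Set.image_congr (fun i hi => hdel i hi)
    have hmemX : delv X j0 ∈ Submodule.span ℚ (delv X '' ↑T) := by
      have := delv_mem_span_cls X j0; rwa [hc] at this
    have hmemX' : delv X' j0 ∈ Submodule.span ℚ (delv X '' ↑T) := by
      have := delv_mem_span_cls X' j0; rw [hc'] at this; rwa [← himg] at this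
    have hmem : ratv X.1 - ratv X'.1 ∈ Submodule.span ℚ (delv X '' ↑T) := by
      have hu : ratv X.1 - ratv X'.1 = delv X j0 - delv X' j0 := by
        rw [sub_eq_sub_iff_sub_eq_sub] at hcross
        exact hcross.symm
      rw [hu]; exact sub_mem hmemX hmemX'
    have hl : X.1 = X'.1 := l_unique hX hX' hc hc' hdel hmem
    have ht : X.2 = X'.2 := by
      funext j
      have := congrFun h j
      by_cases hj : j ∈ sideA T
      · simpa [PhiA, hj] using this
      · have h2 : X.2 j - X.1 = X'.2 j - X'.1 := by simpa [PhiA, hj] using this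
        rw [hl] at h2
        exact sub_left_injective h2
    exact Prod.ext hl ht

lemma injB {T : Finset (Fin d)} {X X' : Cfg d}
    (hX : Alg X) (hX' : Alg X') (hc : cls X = T) (hc' : cls X' = T)
    (h : PhiB T X = PhiB T X') : X = X' := by
  by_cases hT : T = Finset.univ
  · have hl : X.1 = 0 := l_eq_zero_of_cls_univ hX (hc.trans hT)
    have hl' : X'.1 = 0 := l_eq_zero_of_cls_univ hX' (hc'.trans hT)
    have ht : X.2 = X'.2 := by
      funext j
      have := congrFun h j
      by_cases hj : j ∈ sideA T
      · simpa [PhiB, hj, hl, hl'] using this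
      · simpa [PhiB, hj] using this
    exact Prod.ext (hl.trans hl'.symm) ht
  · have h0 : X.2 0 - X.1 = X'.2 0 - X'.1 := by
      have := congrFun h 0
      simpa [PhiB, zero_mem_sideA hT] using this
    have h0q : ratv (X.2 0) - ratv X.1 = ratv (X'.2 0) - ratv X'.1 := by
      have hq := congrArg ratv h0
      rwa [ratv_sub, ratv_sub] at hq
    have hks : ∀ i ∈ T, X.2 i.succ - X.1 = X'.2 i.succ - X'.1 := by
      intro i hi
      have := congrFun h i.succ
      simpa [PhiB, succ_mem_sideA hi] using this
    have hdel : ∀ i ∈ T, delv X i = delv X' i := by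
      intro i hi
      have hq := congrArg ratv (hks i hi)
      rw [ratv_sub, ratv_sub] at hq
      unfold delv
      linear_combination hq - h0q
    obtain ⟨j0, hj0⟩ := exists_not_mem hT
    have hcrossZ : X.2 j0.succ = X'.2 j0.succ := by
      have := congrFun h j0.succ
      simpa [PhiB, succ_not_mem_sideA hj0] using this
    have himg : delv X '' ↑T = delv X' '' ↑T := Set.image_congr (fun i hi => hdel i hi)
    have hmemX : delv X j0 ∈ Submodule.span ℚ (delv X '' ↑T) := by
      have := delv_mem_span_cls X j0; rwa [hc] at this
    have hmemX' : delv X' j0 ∈ Submodule.span ℚ (delv X '' ↑T) := by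
      have := delv_mem_span_cls X' j0; rw [hc'] at this; rwa [← himg] at this
    have hmem : ratv X.1 - ratv X'.1 ∈ Submodule.span ℚ (delv X '' ↑T) := by
      have hq := congrArg ratv hcrossZ
      have hu : ratv X.1 - ratv X'.1 = delv X' j0 - delv X j0 := by
        unfold delv
        linear_combination hq - h0q
      rw [hu]; exact sub_mem hmemX' hmemX
    have hl : X.1 = X'.1 := l_unique hX hX' hc hc' hdel hmem
    have ht : X.2 = X'.2 := by
      funext j
      have := congrFun h j
      by_cases hj : j ∈ sideA T
      · have h2 : X.2 j - X.1 = X'.2 j - X'.1 := by simpa [PhiB, hj] using this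
        rw [hl] at h2
        exact sub_left_injective h2
      · simpa [PhiB, hj] using this
    exact Prod.ext hl ht

def Hfun (v : (Fin d → ℤ) → ℝ≥0∞) (X : Cfg d) : ℝ≥0∞ :=
  if Alg X then ∏ j, v (X.2 j) * v (X.2 j - X.1) else 0

lemma class_bound (v : (Fin d → ℤ) → ℝ≥0∞) (T : Finset (Fin d)) :
    (∑' X : Cfg d, if cls X = T ∧ Alg X then ∏ j, v (X.2 j) * v (X.2 j - X.1) else 0)
      ≤ (∑' k, v k ^ 2) ^ (d + 1) := by
  classical
  set n := d + 1 with hn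
  set PP : Cfg d → Prop := fun X => cls X = T ∧ Alg X with hPP
  set GA : Cfg d → ℝ≥0∞ := fun X => ∏ j, v (PhiA T X j) ^ 2 with hGA
  set GB : Cfg d → ℝ≥0∞ := fun X => ∏ j, v (PhiB T X j) ^ 2 with hGB
  set N : ℝ≥0∞ := ∑' k, v k ^ 2 with hN
  have hGbound : ∀ (G : Cfg d → ℝ≥0∞) (Φ : Cfg d → (Fin n → Fin d → ℤ)),
      (∀ X, G X = ∏ j, v (Φ X j) ^ 2) →
      (∀ X X', PP X → PP X' → Φ X = Φ X' → X = X') →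
      (∑' X : Cfg d, if PP X then G X else 0) ≤ N ^ n := by
    intro G Φ hG hinj
    have hsupp : Function.support (fun X : Cfg d => if PP X then G X else 0) ⊆ {X | PP X} := by
      intro X hX
      by_contra hc
      simp only [Set.mem_setOf_eq] at hc
      simp only [Function.mem_support, if_neg hc, ne_eq, not_true_eq_false] at hX
    have h1 : (∑' X : Cfg d, if PP X then G X else 0)
        = ∑' z : ↑{X : Cfg d | PP X}, G z.val :=
      calc (∑' X : Cfg d, if PP X then G X else 0)
          = ∑' z : ↑{X : Cfg d | PP X}, (if PP z.val then G z.val else 0) :=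
            (tsum_subtype_eq_of_support_subset hsupp).symm
        _ = ∑' z : ↑{X : Cfg d | PP X}, G z.val :=
            tsum_congr fun z => if_pos z.prop
    rw [h1]
    have hcomp : (∑' z : ↑{X : Cfg d | PP X}, G z.val)
        = ∑' z : ↑{X : Cfg d | PP X}, (fun u : Fin n → Fin d → ℤ => ∏ j, v (u j) ^ 2) (Φ z.val) :=
      tsum_congr fun z => by rw [hG]
    rw [hcomp]
    have hinj2 : Function.Injective (fun z : ↑{X : Cfg d | PP X} => Φ z.val) := by
      intro z1 z2 h
      exact Subtype.ext (hinj z1.val z2.val z1.prop z2.prop h)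
    calc ∑' z : ↑{X : Cfg d | PP X}, (fun u : Fin n → Fin d → ℤ => ∏ j, v (u j) ^ 2) (Φ z.val)
        ≤ ∑' u : Fin n → Fin d → ℤ, ∏ j, v (u j) ^ 2 :=
          ENNReal.tsum_comp_le_tsum_of_injective hinj2 _
      _ = N ^ n := (tsum_pow_eq (fun k => v k ^ 2) n).symm
  -- now the AM-GM split
  have hA : (∑' X : Cfg d, if PP X then GA X else 0) ≤ N ^ n :=
    hGbound GA (PhiA T) (fun X => rfl)
      (fun X X' h h' hφ => injA h.2 h'.2 h.1 h'.1 hφ)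
  have hB : (∑' X : Cfg d, if PP X then GB X else 0) ≤ N ^ n :=
    hGbound GB (PhiB T) (fun X => rfl)
      (fun X X' h h' hφ => injB h.2 h'.2 h.1 h'.1 hφ)
  have hpoint : ∀ X : Cfg d, 2 * (if PP X then ∏ j, v (X.2 j) * v (X.2 j - X.1) else 0)
      ≤ (if PP X then GA X else 0) + (if PP X then GB X else 0) := by
    intro X
    by_cases h : PP X
    · rw [if_pos h, if_pos h, if_pos h]
      have hsplit : (∏ j, v (X.2 j) * v (X.2 j - X.1))
          = (∏ j, v (PhiA T X j)) * (∏ j, v (PhiB T X j)) := by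
        rw [← Finset.prod_mul_distrib]
        refine Finset.prod_congr rfl fun j _ => ?_
        by_cases hj : j ∈ sideA T
        · simp [PhiA, PhiB, hj]
        · simp [PhiA, PhiB, hj, mul_comm]
      rw [hsplit]
      have h2m := two_mul_le_sq_add_sq (∏ j, v (PhiA T X j)) (∏ j, v (PhiB T X j))
      simpa [hGA, hGB, ← Finset.prod_pow] using h2m
    · simp [h]
  have h2 : 2 * (∑' X : Cfg d, if PP X then ∏ j, v (X.2 j) * v (X.2 j - X.1) else 0)
      ≤ 2 * N ^ n := by
    calc 2 * (∑' X : Cfg d, if PP X then ∏ j, v (X.2 j) * v (X.2 j - X.1) else 0)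
        = ∑' X : Cfg d, 2 * (if PP X then ∏ j, v (X.2 j) * v (X.2 j - X.1) else 0) :=
          ENNReal.tsum_mul_left.symm
      _ ≤ ∑' X : Cfg d, ((if PP X then GA X else 0) + (if PP X then GB X else 0)) :=
          Summable.tsum_le_tsum hpoint ENNReal.summable ENNReal.summable
      _ = (∑' X : Cfg d, if PP X then GA X else 0) + (∑' X : Cfg d, if PP X then GB X else 0) :=
          ENNReal.tsum_add
      _ ≤ N ^ n + N ^ n := add_le_add hA hB
      _ = 2 * N ^ n := (two_mul _).symm
  exact (ENNReal.mul_le_mul_iff_right (two_ne_zero) (ENNReal.ofNat_ne_top)).mp h2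

theorem core (v : (Fin d → ℤ) → ℝ≥0∞) :
    (∑' ls : (Fin d → ℤ) × ℤ,
      (∑' k, if Qph k ls.1 = ls.2 then v k * v (k - ls.1) else 0) ^ (d + 1))
      ≤ 2 ^ d * (∑' k, v k ^ 2) ^ (d + 1) := by
  classical
  set n := d + 1 with hn
  set N : ℝ≥0∞ := ∑' k, v k ^ 2 with hN
  -- Step A : expand the power and collapse the `s`-summation
  have stepA : (∑' ls : (Fin d → ℤ) × ℤ,
      (∑' k, if Qph k ls.1 = ls.2 then v k * v (k - ls.1) else 0) ^ n)
      = ∑' X : Cfg d, Hfun v X := by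
    rw [ENNReal.tsum_prod
      (f := fun l s => (∑' k, if Qph k l = s then v k * v (k - l) else 0) ^ n)]
    have inner : ∀ l : Fin d → ℤ,
        (∑' s : ℤ, (∑' k, if Qph k l = s then v k * v (k - l) else 0) ^ n)
        = ∑' t : Fin n → Fin d → ℤ,
            (if Alg ((l, t) : Cfg d) then ∏ j, v (t j) * v (t j - l) else 0) := by
      intro l
      have e1 : ∀ s : ℤ,
          (∑' k, if Qph k l = s then v k * v (k - l) else 0) ^ n
          = ∑' t : Fin n → Fin d → ℤ,
              (if (∀ j, Qph (t j) l = s) then ∏ j, v (t j) * v (t j - l) else 0) := by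
        intro s
        rw [tsum_pow_eq (fun k => if Qph k l = s then v k * v (k - l) else 0) n]
        exact tsum_congr fun t => prod_ite_zero (fun j => Qph (t j) l = s) _
      rw [tsum_congr e1, ENNReal.tsum_comm]
      refine tsum_congr fun t => ?_
      have hiff : ∀ s : ℤ, (∀ j, Qph (t j) l = s) ↔ (s = Qph (t 0) l ∧ Alg ((l, t) : Cfg d)) := by
        intro s
        constructor
        · intro h
          refine ⟨(h 0).symm, fun j => ?_⟩
          have : Qph (t j) l = Qph (t 0) l := (h j).trans (h 0).symm
          exact (Qph_eq_iff _ _ _).mp this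
        · rintro ⟨rfl, hAlg⟩
          intro j
          exact (Qph_eq_iff _ _ _).mpr (hAlg j)
      calc (∑' s : ℤ, if (∀ j, Qph (t j) l = s) then ∏ j, v (t j) * v (t j - l) else 0)
          = ∑' s : ℤ, (if (s = Qph (t 0) l ∧ Alg ((l, t) : Cfg d))
              then ∏ j, v (t j) * v (t j - l) else 0) :=
            tsum_congr fun s => by rw [if_congr (hiff s) rfl rfl]
        _ = (if Alg ((l, t) : Cfg d) then ∏ j, v (t j) * v (t j - l) else 0) := by
            by_cases hAlg : Alg ((l, t) : Cfg d)
            · simp only [hAlg, and_true, if_pos]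
              exact tsum_ite_eq (Qph (t 0) l) _
            · simp [hAlg]
    rw [tsum_congr inner]
    exact (ENNReal.tsum_prod (f := fun l t => Hfun v ((l, t) : Cfg d))).symm
  rw [stepA]
  -- Step B : decompose into `2 ^ d` classes
  have hdecomp : (∑' X : Cfg d, Hfun v X)
      = ∑ T ∈ (Finset.univ : Finset (Finset (Fin d))),
          ∑' X : Cfg d, (if cls X = T ∧ Alg X then ∏ j, v (X.2 j) * v (X.2 j - X.1) else 0) := by
    rw [← Summable.tsum_finsetSum (fun T _ => ENNReal.summable)]
    refine tsum_congr fun X => ?_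
    have : ∀ T : Finset (Fin d),
        (if cls X = T ∧ Alg X then ∏ j, v (X.2 j) * v (X.2 j - X.1) else 0)
        = (if cls X = T then Hfun v X else 0) := by
      intro T
      by_cases h1 : cls X = T <;> by_cases h2 : Alg X <;> simp [Hfun, h1, h2]
    rw [Finset.sum_congr rfl fun T _ => this T]
    rw [Finset.sum_ite_eq (Finset.univ : Finset (Finset (Fin d))) (cls X) (fun _ => Hfun v X)]
    simp
  rw [hdecomp]
  calc (∑ T ∈ (Finset.univ : Finset (Finset (Fin d))),
        ∑' X : Cfg d, (if cls X = T ∧ Alg X then ∏ j, v (X.2 j) * v (X.2 j - X.1) else 0))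
      ≤ ∑ T ∈ (Finset.univ : Finset (Finset (Fin d))), N ^ n :=
        Finset.sum_le_sum fun T _ => class_bound v T
    _ = (Finset.univ : Finset (Finset (Fin d))).card • N ^ n := (Finset.sum_const _)
    _ = 2 ^ d * N ^ n := by
        rw [Finset.card_univ, Fintype.card_finset, Fintype.card_fin]
        rw [nsmul_eq_mul]
        push_cast
        ring

lemma normb_le (a : (Fin d → ℤ) → ℂ) (l : Fin d → ℤ) (s : ℤ) :
    (‖bcoef a l s‖₊ : ℝ≥0∞)
      ≤ ∑' k, if Qph k l = s then (‖a k‖₊ : ℝ≥0∞) * (‖a (k - l)‖₊ : ℝ≥0∞) else 0 := by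
  set F : (Fin d → ℤ) → ℂ :=
    fun k => if Qph k l = s then a k * (starRingEnd ℂ) (a (k - l)) else 0 with hF
  have hbc : bcoef a l s = ∑' k, F k := rfl
  by_cases hS : Summable F
  · have hnorm : Summable fun k => ‖F k‖ := summable_norm_iff.mpr hS
    have h1 : ‖bcoef a l s‖ ≤ ∑' k, ‖F k‖ := by
      rw [hbc]; exact norm_tsum_le_tsum_norm hnorm
    have h2 : (‖bcoef a l s‖₊ : ℝ≥0∞) ≤ ENNReal.ofReal (∑' k, ‖F k‖) := by
      rw [← enorm_eq_nnnorm, ← ofReal_norm]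
      exact ENNReal.ofReal_le_ofReal h1
    have h3 : ENNReal.ofReal (∑' k, ‖F k‖) = ∑' k, ENNReal.ofReal ‖F k‖ :=
      ENNReal.ofReal_tsum_of_nonneg (fun _ => norm_nonneg _) hnorm
    have h4 : ∀ k, ENNReal.ofReal ‖F k‖
        = (if Qph k l = s then (‖a k‖₊ : ℝ≥0∞) * (‖a (k - l)‖₊ : ℝ≥0∞) else 0) := by
      intro k
      by_cases hc : Qph k l = s
      · rw [hF]
        simp only [if_pos hc, ofReal_norm, enorm_eq_nnnorm]
        rw [nnnorm_mul]
        push_cast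
        congr 1
        have : ‖(starRingEnd ℂ) (a (k - l))‖₊ = ‖a (k - l)‖₊ := nnnorm_star _
        rw [this]
      · simp [hF, hc]
    calc (‖bcoef a l s‖₊ : ℝ≥0∞) ≤ ENNReal.ofReal (∑' k, ‖F k‖) := h2
      _ = ∑' k, ENNReal.ofReal ‖F k‖ := h3
      _ = ∑' k, (if Qph k l = s then (‖a k‖₊ : ℝ≥0∞) * (‖a (k - l)‖₊ : ℝ≥0∞) else 0) :=
        tsum_congr h4
  · have : bcoef a l s = 0 := by rw [hbc]; exact tsum_eq_zero_of_not_summable hS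
    rw [this]
    simp

end

end AJM

open AJM

/-- Theorem 1 (Aïssiou–Jakobson–Macià): `Σ_{(l,s)} |b_u(l,s)|^{d+1} ≤ 2^d ‖u‖^{2(d+1)}`;
in particular `‖b_u‖_{ℓ^{d+1}(ℤ^{d+1})} ≤ C_d ‖u‖²_{L²}` with `C_d = 2^{d/(d+1)}`. -/
theorem tsum_bcoef_pow_le (d : ℕ) (hd : 1 ≤ d) (a : (Fin d → ℤ) → ℂ)
    (ha : Summable fun k : Fin d → ℤ => ‖a k‖ ^ 2) :
    (Summable fun ls : (Fin d → ℤ) × ℤ => ‖bcoef a ls.1 ls.2‖ ^ (d + 1)) ∧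
      (∑' ls : (Fin d → ℤ) × ℤ, ‖bcoef a ls.1 ls.2‖ ^ (d + 1)) ≤
        2 ^ d * (∑' k : Fin d → ℤ, ‖a k‖ ^ 2) ^ (d + 1) ∧
      ∃ C : ℝ, 0 < C ∧
        (∑' ls : (Fin d → ℤ) × ℤ, ‖bcoef a ls.1 ls.2‖ ^ (d + 1)) ^ ((1 : ℝ) / (d + 1)) ≤
          C * ∑' k : Fin d → ℤ, ‖a k‖ ^ 2 := by
  classical
  set n := d + 1 with hn
  set v : (Fin d → ℤ) → ℝ≥0 := fun k => ‖a k‖₊ with hv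
  -- summability of v^2 in ℝ≥0
  have hsum2 : Summable (fun k => v k ^ 2) := by
    rw [← NNReal.summable_coe]
    exact ha
  set Nnn : ℝ≥0 := ∑' k, v k ^ 2 with hNnn
  have hNr : (Nnn : ℝ) = ∑' k, ‖a k‖ ^ 2 := by
    rw [hNnn, NNReal.coe_tsum]
    exact tsum_congr fun k => by simp [hv]
  have hNcoe : (∑' k, ((v k : ℝ≥0∞)) ^ 2) = (Nnn : ℝ≥0∞) := by
    rw [hNnn, ENNReal.coe_tsum hsum2]
    exact tsum_congr fun k => (ENNReal.coe_pow _ _).symm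
  -- pointwise bound and the core estimate
  have hb : ∀ ls : (Fin d → ℤ) × ℤ,
      ((‖bcoef a ls.1 ls.2‖₊ ^ n : ℝ≥0) : ℝ≥0∞)
        ≤ (∑' k, if Qph k ls.1 = ls.2 then ((v k : ℝ≥0∞)) * ((v (k - ls.1) : ℝ≥0∞)) else 0) ^ n := by
    intro ls
    rw [ENNReal.coe_pow]
    exact pow_le_pow_left₀ zero_le (normb_le a ls.1 ls.2) n
  have hcore := core (d := d) (fun k => ((v k : ℝ≥0∞)))
  have hchain : (∑' ls : (Fin d → ℤ) × ℤ, ((‖bcoef a ls.1 ls.2‖₊ ^ n : ℝ≥0) : ℝ≥0∞))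
      ≤ ((2 ^ d * Nnn ^ n : ℝ≥0) : ℝ≥0∞) := by
    calc (∑' ls : (Fin d → ℤ) × ℤ, ((‖bcoef a ls.1 ls.2‖₊ ^ n : ℝ≥0) : ℝ≥0∞))
        ≤ ∑' ls : (Fin d → ℤ) × ℤ,
            (∑' k, if Qph k ls.1 = ls.2 then ((v k : ℝ≥0∞)) * ((v (k - ls.1) : ℝ≥0∞)) else 0) ^ n :=
          Summable.tsum_le_tsum hb ENNReal.summable ENNReal.summable
      _ ≤ 2 ^ d * (∑' k, ((v k : ℝ≥0∞)) ^ 2) ^ n := hcore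
      _ = ((2 ^ d * Nnn ^ n : ℝ≥0) : ℝ≥0∞) := by
          rw [hNcoe]
          push_cast
          ring
  -- summability
  have hsumNN : Summable (fun ls : (Fin d → ℤ) × ℤ => ‖bcoef a ls.1 ls.2‖₊ ^ n) :=
    ENNReal.tsum_coe_ne_top_iff_summable.mp (ne_top_of_le_ne_top ENNReal.coe_ne_top hchain)
  have hsumR : Summable fun ls : (Fin d → ℤ) × ℤ => ‖bcoef a ls.1 ls.2‖ ^ n := by
    have h := NNReal.summable_coe.mpr hsumNN
    have he : (fun ls : (Fin d → ℤ) × ℤ => ((‖bcoef a ls.1 ls.2‖₊ ^ n : ℝ≥0) : ℝ))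
        = fun ls : (Fin d → ℤ) × ℤ => ‖bcoef a ls.1 ls.2‖ ^ n := by
      funext ls; simp
    rwa [he] at h
  have hP2 : (∑' ls : (Fin d → ℤ) × ℤ, ‖bcoef a ls.1 ls.2‖ ^ n)
      ≤ 2 ^ d * (∑' k, ‖a k‖ ^ 2) ^ n := by
    have hNN : (∑' ls : (Fin d → ℤ) × ℤ, ‖bcoef a ls.1 ls.2‖₊ ^ n) ≤ 2 ^ d * Nnn ^ n := by
      rw [← ENNReal.coe_le_coe, ENNReal.coe_tsum hsumNN]
      calc (∑' ls : (Fin d → ℤ) × ℤ, ((‖bcoef a ls.1 ls.2‖₊ ^ n : ℝ≥0) : ℝ≥0∞))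
          ≤ ((2 ^ d * Nnn ^ n : ℝ≥0) : ℝ≥0∞) := hchain
        _ = _ := by push_cast; ring
    have := NNReal.coe_le_coe.mpr hNN
    rw [NNReal.coe_tsum] at this
    calc (∑' ls : (Fin d → ℤ) × ℤ, ‖bcoef a ls.1 ls.2‖ ^ n)
        = ∑' ls : (Fin d → ℤ) × ℤ, ((‖bcoef a ls.1 ls.2‖₊ ^ n : ℝ≥0) : ℝ) :=
          tsum_congr fun ls => by simp
      _ ≤ ((2 ^ d * Nnn ^ n : ℝ≥0) : ℝ) := this
      _ = 2 ^ d * (∑' k, ‖a k‖ ^ 2) ^ n := by rw [← hNr]; push_cast; ring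
  refine ⟨hsumR, hP2, ⟨2 ^ d, by positivity, ?_⟩⟩
  have hX : (0:ℝ) ≤ ∑' ls : (Fin d → ℤ) × ℤ, ‖bcoef a ls.1 ls.2‖ ^ n :=
    tsum_nonneg fun _ => by positivity
  have hS0 : (0:ℝ) ≤ ∑' k, ‖a k‖ ^ 2 := tsum_nonneg fun _ => by positivity
  have hexp : ((n : ℝ)) * ((1 : ℝ) / (d + 1)) = 1 := by
    rw [hn]; push_cast; field_simp
  have hb1 : ((2:ℝ) ^ d) ^ ((1 : ℝ) / (d + 1)) ≤ (2:ℝ) ^ d := by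
    have h1 : ((2:ℝ) ^ d) ^ ((1 : ℝ) / (d + 1)) ≤ ((2:ℝ) ^ d) ^ (1:ℝ) := by
      apply Real.rpow_le_rpow_of_exponent_le (one_le_pow₀ (by norm_num))
      rw [div_le_one (by positivity)]
      have hdn : (0:ℝ) ≤ (d:ℝ) := Nat.cast_nonneg d
      linarith
    rwa [Real.rpow_one] at h1
  calc (∑' ls : (Fin d → ℤ) × ℤ, ‖bcoef a ls.1 ls.2‖ ^ n) ^ ((1 : ℝ) / (d + 1))
      ≤ (2 ^ d * (∑' k, ‖a k‖ ^ 2) ^ n) ^ ((1 : ℝ) / (d + 1)) :=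
        Real.rpow_le_rpow hX hP2 (by positivity)
    _ = ((2:ℝ) ^ d) ^ ((1 : ℝ) / (d + 1)) * ((∑' k, ‖a k‖ ^ 2) ^ n) ^ ((1 : ℝ) / (d + 1)) :=
        Real.mul_rpow (by positivity) (by positivity)
    _ = ((2:ℝ) ^ d) ^ ((1 : ℝ) / (d + 1)) * (∑' k, ‖a k‖ ^ 2) := by
        rw [← Real.rpow_natCast (∑' k, ‖a k‖ ^ 2) n, ← Real.rpow_mul hS0, hexp, Real.rpow_one]
    _ ≤ 2 ^ d * ∑' k, ‖a k‖ ^ 2 := mul_le_mul_of_nonneg_right hb1 hS0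
end

section
/- Let d ≥ 1, let δ and r be integers with 1 ≤ δ ≤ d and 0 ≤ r ≤ δ−1, and let a : ℤ^d → ℂ be square-summable with ‖u‖² = Σ_{k∈ℤ^d} |a_k|². Then T_{r,δ}(u) ≤ binom(δ,r) · ‖u‖^{2(δ+1)}. -/
open scoped BigOperators
open Matrix

attribute [local instance] Classical.propDecidable

/-- The lattice hyperplane `H_{(l,s)} = { j ∈ ℤ^d : 2 l·j = -s - |l|² }`. -/
def Hplane {d : ℕ} (l : Fin d → ℤ) (s : ℤ) : Set (Fin d → ℤ) :=
  {j | 2 * (l ⬝ᵥ j) = -s - l ⬝ᵥ l}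

/-- The dimension of the affine variety spanned in `ℝ^d` by a set of lattice points:
the dimension of the direction of their affine span. -/
noncomputable def spanDim {d : ℕ} (pts : Set (Fin d → ℤ)) : ℕ :=
  Module.finrank ℝ
    ((affineSpan ℝ ((fun (j : Fin d → ℤ) (i : Fin d) => (j i : ℝ)) '' pts)).direction)

/-- `T_{r,δ}(u) = Σ_{(l,s), l≠0} Σ_{(j₁,…,j_{δ+1}) ∈ H_{(l,s)}^{δ+1} ∩ 𝒱_r^δ}
Π_σ |a_{j_σ+l}| |a_{j_σ}|`. -/
noncomputable def Tsum (d δ r : ℕ) (a : (Fin d → ℤ) → ℂ) : ℝ :=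
  ∑' p : ((Fin d → ℤ) × ℤ) × (Fin (δ + 1) → (Fin d → ℤ)),
    if p.1.1 ≠ 0 ∧ (∀ σ, p.2 σ ∈ Hplane p.1.1 p.1.2) ∧ spanDim (Set.range p.2) = r
    then ∏ σ : Fin (δ + 1), ‖a (p.2 σ + p.1.1)‖ * ‖a (p.2 σ)‖ else 0

namespace TsumAux

open scoped ENNReal NNReal

variable {d δ r : ℕ}

/-- The index type of the big sum. -/
abbrev PT (d δ : ℕ) := ((Fin d → ℤ) × ℤ) × (Fin (δ + 1) → (Fin d → ℤ))

/-- coordinatewise cast `ℤ^d → ℝ^d`. -/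
def castR {d : ℕ} (v : Fin d → ℤ) : Fin d → ℝ := fun i => (v i : ℝ)

lemma castR_injective : Function.Injective (castR (d := d)) := by
  intro x y h
  funext i
  have := congrFun h i
  simpa [castR] using this

lemma castR_add (x y : Fin d → ℤ) : castR (x + y) = castR x + castR y := by
  funext i; simp [castR]

lemma castR_sub (x y : Fin d → ℤ) : castR (x - y) = castR x - castR y := by
  funext i; simp [castR]

lemma castR_dot (x y : Fin d → ℤ) : ((x ⬝ᵥ y : ℤ) : ℝ) = castR x ⬝ᵥ castR y := by
  simp [dotProduct, castR]

lemma dot_span_zero (l : Fin d → ℤ) (gens : Set (Fin d → ℝ))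
    (h : ∀ g ∈ gens, castR l ⬝ᵥ g = 0) :
    ∀ x ∈ Submodule.span ℝ gens, castR l ⬝ᵥ x = 0 := by
  intro x hx
  induction hx using Submodule.span_induction with
  | mem x hxg => exact h x hxg
  | zero => simp
  | add x y hx hy ihx ihy => rw [dotProduct_add, ihx, ihy, add_zero]
  | smul c x hx ihx => rw [dotProduct_smul, ihx, smul_zero]

lemma decomp_unique (V : Submodule ℝ (Fin d → ℝ)) {w w' : Fin d → ℝ} {l l' : Fin d → ℤ}
    (hw : w ∈ V) (hw' : w' ∈ V)
    (hl : ∀ x ∈ V, castR l ⬝ᵥ x = 0) (hl' : ∀ x ∈ V, castR l' ⬝ᵥ x = 0)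
    (heq : w + castR l = w' + castR l') : w = w' ∧ l = l' := by
  have hx : w - w' = castR l' - castR l := by linear_combination heq
  have hxV : w - w' ∈ V := V.sub_mem hw hw'
  have hdot : (w - w') ⬝ᵥ (w - w') = 0 := by
    nth_rewrite 1 [hx]
    rw [sub_dotProduct, hl' _ hxV, hl _ hxV, sub_zero]
  have h0 : w = w' := sub_eq_zero.mp (dotProduct_self_eq_zero.mp hdot)
  refine ⟨h0, castR_injective ?_⟩
  rw [h0] at heq
  exact add_left_cancel heq

lemma enn_amgm (A B : ℝ≥0∞) : 2 * (A * B) ≤ A ^ 2 + B ^ 2 := by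
  rcases eq_or_ne A ⊤ with hA | hA
  · rcases eq_or_ne B 0 with hB | hB
    · simp [hA, hB]
    · have : A ^ 2 = ⊤ := by simp [hA]
      rw [this]; exact le_trans le_top (le_add_right le_rfl)
  · rcases eq_or_ne B ⊤ with hB | hB
    · rcases eq_or_ne A 0 with hA0 | hA0
      · simp [hB, hA0]
      · have : B ^ 2 = ⊤ := by simp [hB]
        rw [this]; exact le_trans le_top (le_add_left le_rfl)
    · lift A to ℝ≥0 using hA
      lift B to ℝ≥0 using hB
      have h : (2 : ℝ≥0) * (A * B) ≤ A ^ 2 + B ^ 2 := by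
        have := two_mul_le_add_sq (A : ℝ) (B : ℝ)
        rw [← NNReal.coe_le_coe]
        push_cast
        linarith
      calc (2 : ℝ≥0∞) * (↑A * ↑B) = ((2 * (A * B) : ℝ≥0) : ℝ≥0∞) := by push_cast; ring
        _ ≤ ((A ^ 2 + B ^ 2 : ℝ≥0) : ℝ≥0∞) := by exact_mod_cast h
        _ = (A : ℝ≥0∞) ^ 2 + (B : ℝ≥0∞) ^ 2 := by push_cast; ring

lemma tsum_pi_pow {γ : Type*} (n : ℕ) (h : γ → ℝ≥0∞) :
    ∑' m : Fin n → γ, ∏ i, h (m i) = (∑' x, h x) ^ n := by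
  induction n with
  | zero =>
    rw [pow_zero]
    rw [(hasSum_unique (fun m : Fin 0 → γ => ∏ i, h (m i))).tsum_eq]
    simp
  | succ n ih =>
    rw [← (Fin.consEquiv (fun _ : Fin (n+1) => γ)).tsum_eq]
    have hfe : ∀ x : γ × (Fin n → γ),
        (∏ i, h ((Fin.consEquiv (fun _ : Fin (n+1) => γ)) x i))
          = h x.1 * ∏ i, h (x.2 i) := by
      intro x
      rw [Fin.prod_univ_succ]
      simp [Fin.consEquiv]
    calc ∑' x : γ × (Fin n → γ), ∏ i, h ((Fin.consEquiv fun _ => γ) x i)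
        = ∑' x : γ × (Fin n → γ), h x.1 * ∏ i, h (x.2 i) := tsum_congr hfe
      _ = ∑' c : γ, ∑' m : Fin n → γ, h c * ∏ i, h (m i) := ENNReal.tsum_prod'
      _ = ∑' c : γ, h c * ((∑' x, h x) ^ n) := by
          refine tsum_congr fun c => ?_
          rw [ENNReal.tsum_mul_left, ih]
      _ = (∑' c : γ, h c) * ((∑' x, h x) ^ n) := ENNReal.tsum_mul_right
      _ = (∑' x, h x) ^ (n + 1) := by rw [pow_succ']

/-! ### Geometric data attached to a configuration -/

/-- The real difference vectors `j_σ - j_0`. -/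
def Dv (p : PT d δ) (σ : Fin (δ + 1)) : Fin d → ℝ := castR (p.2 σ) - castR (p.2 0)

/-- The main condition of the theorem. -/
def Cond (d δ r : ℕ) (p : PT d δ) : Prop :=
  p.1.1 ≠ 0 ∧ (∀ σ, p.2 σ ∈ Hplane p.1.1 p.1.2) ∧ spanDim (Set.range p.2) = r

/-- The difference vectors indexed by `S` span all difference vectors. -/
def good (S : Finset (Fin (δ + 1))) (p : PT d δ) : Prop :=
  ∀ σ, Dv p σ ∈ Submodule.span ℝ (Dv p '' (S : Set (Fin (δ + 1))))

lemma mem_dot {p : PT d δ} (hmem : ∀ σ, p.2 σ ∈ Hplane p.1.1 p.1.2) (σ : Fin (δ + 1)) :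
    p.1.1 ⬝ᵥ (p.2 σ - p.2 0) = 0 := by
  have h1 := hmem σ
  have h0 := hmem 0
  simp only [Hplane, Set.mem_setOf_eq] at h1 h0
  have h2 : 2 * (p.1.1 ⬝ᵥ p.2 σ) = 2 * (p.1.1 ⬝ᵥ p.2 0) := by rw [h1, h0]
  have h3 : p.1.1 ⬝ᵥ p.2 σ = p.1.1 ⬝ᵥ p.2 0 :=
    mul_left_cancel₀ (by norm_num : (2 : ℤ) ≠ 0) h2
  rw [dotProduct_sub, h3, sub_self]

lemma orth_l {p : PT d δ} (hmem : ∀ σ, p.2 σ ∈ Hplane p.1.1 p.1.2)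
    (S : Finset (Fin (δ + 1))) :
    ∀ x ∈ Submodule.span ℝ (Dv p '' (S : Set (Fin (δ + 1)))), castR p.1.1 ⬝ᵥ x = 0 := by
  apply dot_span_zero
  rintro g ⟨σ, hσ, rfl⟩
  have hz := mem_dot hmem σ
  have hc : castR p.1.1 ⬝ᵥ castR (p.2 σ - p.2 0) = 0 := by
    rw [← castR_dot, hz]; norm_num
  rw [castR_sub] at hc
  exact hc

/-- The two injections used in the Cauchy–Schwarz/AM-GM step. -/
def I1 (τ₁ : Fin (δ + 1)) (p : PT d δ) : Fin (δ + 1) → (Fin d → ℤ) :=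
  fun σ => if σ = τ₁ then p.2 σ + p.1.1 else p.2 σ

def I2 (τ₁ : Fin (δ + 1)) (p : PT d δ) : Fin (δ + 1) → (Fin d → ℤ) :=
  fun σ => if σ = τ₁ then p.2 σ else p.2 σ + p.1.1

lemma s_eq {p p' : PT d δ} (hmem : ∀ σ, p.2 σ ∈ Hplane p.1.1 p.1.2)
    (hmem' : ∀ σ, p'.2 σ ∈ Hplane p'.1.1 p'.1.2)
    (hl : p.1.1 = p'.1.1) (hj0 : p.2 0 = p'.2 0) : p.1.2 = p'.1.2 := by
  have h0 := hmem 0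
  have h0' := hmem' 0
  simp only [Hplane, Set.mem_setOf_eq] at h0 h0'
  rw [← hl, ← hj0] at h0'
  rw [h0] at h0'
  linarith

lemma I1_inj (S : Finset (Fin (δ + 1))) (τ₁ : Fin (δ + 1)) (hτ0 : τ₁ ≠ 0) (hτS : τ₁ ∉ S)
    {p p' : PT d δ}
    (hp : (∀ σ, p.2 σ ∈ Hplane p.1.1 p.1.2) ∧ good S p)
    (hp' : (∀ σ, p'.2 σ ∈ Hplane p'.1.1 p'.1.2) ∧ good S p')
    (heq : I1 τ₁ p = I1 τ₁ p') : p = p' := by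
  obtain ⟨hmem, hgood⟩ := hp
  obtain ⟨hmem', hgood'⟩ := hp'
  have hje : ∀ σ, σ ≠ τ₁ → p.2 σ = p'.2 σ := by
    intro σ h
    have := congrFun heq σ
    simpa [I1, h] using this
  have hj0 : p.2 0 = p'.2 0 := hje 0 (fun h => hτ0 h.symm)
  have hjS : ∀ σ ∈ S, p.2 σ = p'.2 σ := fun σ hσ => hje σ (fun h => hτS (h ▸ hσ))
  have himg : Dv p '' (S : Set (Fin (δ + 1))) = Dv p' '' (S : Set (Fin (δ + 1))) := by
    apply Set.image_congr
    intro σ hσ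
    simp only [Dv, hjS σ hσ, hj0]
  have hτeq : p.2 τ₁ + p.1.1 = p'.2 τ₁ + p'.1.1 := by
    have := congrFun heq τ₁
    simpa [I1] using this
  have hc : castR (p.2 τ₁) + castR p.1.1 = castR (p'.2 τ₁) + castR p'.1.1 := by
    rw [← castR_add, ← castR_add, hτeq]
  have hj0c : castR (p.2 0) = castR (p'.2 0) := by rw [hj0]
  have E : Dv p τ₁ + castR p.1.1 = Dv p' τ₁ + castR p'.1.1 := by
    simp only [Dv]
    linear_combination hc - hj0c
  have horth := orth_l hmem S
  have horth' : ∀ x ∈ Submodule.span ℝ (Dv p '' (S : Set (Fin (δ + 1)))),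
      castR p'.1.1 ⬝ᵥ x = 0 := by
    rw [himg]; exact orth_l hmem' S
  have hw' : Dv p' τ₁ ∈ Submodule.span ℝ (Dv p '' (S : Set (Fin (δ + 1)))) := by
    rw [himg]; exact hgood' τ₁
  obtain ⟨hD, hll⟩ := decomp_unique _ (hgood τ₁) hw' horth horth' E
  have hjτ : p.2 τ₁ = p'.2 τ₁ := by
    rw [hll] at hτeq
    exact add_right_cancel hτeq
  have hj : p.2 = p'.2 := funext fun σ => by
    by_cases h : σ = τ₁
    · rw [h]; exact hjτ
    · exact hje σ h
  have hs : p.1.2 = p'.1.2 := s_eq hmem hmem' hll hj0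
  exact Prod.ext (Prod.ext hll hs) hj

lemma I2_inj (S : Finset (Fin (δ + 1))) (τ₁ : Fin (δ + 1)) (hτ0 : τ₁ ≠ 0) (hτS : τ₁ ∉ S)
    {p p' : PT d δ}
    (hp : (∀ σ, p.2 σ ∈ Hplane p.1.1 p.1.2) ∧ good S p)
    (hp' : (∀ σ, p'.2 σ ∈ Hplane p'.1.1 p'.1.2) ∧ good S p')
    (heq : I2 τ₁ p = I2 τ₁ p') : p = p' := by
  obtain ⟨hmem, hgood⟩ := hp
  obtain ⟨hmem', hgood'⟩ := hp'
  have hje : ∀ σ, σ ≠ τ₁ → p.2 σ + p.1.1 = p'.2 σ + p'.1.1 := by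
    intro σ h
    have := congrFun heq σ
    simpa [I2, h] using this
  have hjτ : p.2 τ₁ = p'.2 τ₁ := by
    have := congrFun heq τ₁
    simpa [I2] using this
  have h0 : p.2 0 + p.1.1 = p'.2 0 + p'.1.1 := hje 0 (fun h => hτ0 h.symm)
  have hDeq : ∀ σ ∈ S, Dv p σ = Dv p' σ := by
    intro σ hσ
    have h1 := hje σ (fun h => hτS (h ▸ hσ))
    have h2 : p.2 σ - p.2 0 = p'.2 σ - p'.2 0 := by
      have := congrArg₂ (· - ·) h1 h0
      simpa using this
    simp only [Dv, ← castR_sub, h2]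
  have himg : Dv p '' (S : Set (Fin (δ + 1))) = Dv p' '' (S : Set (Fin (δ + 1))) := by
    apply Set.image_congr
    intro σ hσ
    exact hDeq σ hσ
  have hc0 : castR (p.2 0) + castR p.1.1 = castR (p'.2 0) + castR p'.1.1 := by
    rw [← castR_add, ← castR_add, h0]
  have hcτ : castR (p.2 τ₁) = castR (p'.2 τ₁) := by rw [hjτ]
  have E : Dv p τ₁ + castR p'.1.1 = Dv p' τ₁ + castR p.1.1 := by
    simp only [Dv]
    linear_combination hcτ - hc0
  have horth := orth_l hmem S
  have horth' : ∀ x ∈ Submodule.span ℝ (Dv p '' (S : Set (Fin (δ + 1)))),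
      castR p'.1.1 ⬝ᵥ x = 0 := by
    rw [himg]; exact orth_l hmem' S
  have hw' : Dv p' τ₁ ∈ Submodule.span ℝ (Dv p '' (S : Set (Fin (δ + 1)))) := by
    rw [himg]; exact hgood' τ₁
  obtain ⟨hD, hll⟩ := decomp_unique _ (hgood τ₁) hw' horth' horth E
  have hll' : p.1.1 = p'.1.1 := hll.symm
  have hj0 : p.2 0 = p'.2 0 := by
    rw [hll'] at h0
    exact add_right_cancel h0
  have hj : p.2 = p'.2 := funext fun σ => by
    by_cases h : σ = τ₁
    · rw [h]; exact hjτ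
    · have h1 := hje σ h
      rw [hll'] at h1
      exact add_right_cancel h1
  have hs : p.1.2 = p'.1.2 := s_eq hmem hmem' hll' hj0
  exact Prod.ext (Prod.ext hll' hs) hj

/-- Covering lemma: any configuration spanning dimension `r` admits a good index set `S`. -/
lemma exists_good {p : PT d δ} (hdim : spanDim (Set.range p.2) = r) :
    ∃ S : Finset (Fin (δ + 1)),
      S ⊆ ({0}ᶜ : Finset (Fin (δ + 1))) ∧ S.card = r ∧ good S p := by
  classical
  have hfr : Module.finrank ℝ (Submodule.span ℝ (Set.range (Dv p))) = r := by
    rw [← hdim]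
    unfold spanDim
    have himg : ((fun (j : Fin d → ℤ) (i : Fin d) => (j i : ℝ)) '' Set.range p.2)
        = Set.range (fun σ => castR (p.2 σ)) := by
      rw [← Set.range_comp]; rfl
    rw [himg, direction_affineSpan, vectorSpan_range_eq_span_range_vsub_right ℝ _ 0]
    rfl
  obtain ⟨t, hts, htspan, htli⟩ := exists_linearIndependent ℝ (Set.range (Dv p))
  have htfin : t.Finite := htli.setFinite
  haveI := htfin.fintype
  have hcard : t.toFinset.card = r := by
    rw [← finrank_span_set_eq_card htli, htspan, hfr]
  have hchoice : ∀ x ∈ t, ∃ σ : Fin (δ + 1), σ ≠ 0 ∧ Dv p σ = x := by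
    intro x hx
    obtain ⟨σ, hσ⟩ := hts hx
    have hx0 : x ≠ 0 := htli.ne_zero ⟨x, hx⟩
    refine ⟨σ, ?_, hσ⟩
    rintro rfl
    apply hx0
    rw [← hσ]
    simp [Dv]
  let φ : (Fin d → ℝ) → Fin (δ + 1) := fun x =>
    if h : ∃ σ : Fin (δ + 1), σ ≠ 0 ∧ Dv p σ = x then h.choose else 0
  have hφ : ∀ x ∈ t, φ x ≠ 0 ∧ Dv p (φ x) = x := by
    intro x hx
    have h := hchoice x hx
    simp only [φ, dif_pos h]
    exact ⟨h.choose_spec.1, h.choose_spec.2⟩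
  refine ⟨t.toFinset.image φ, ?_, ?_, ?_⟩
  · intro σ hσ
    obtain ⟨x, hx, rfl⟩ := Finset.mem_image.mp hσ
    rw [Finset.mem_compl, Finset.mem_singleton]
    exact (hφ x (Set.mem_toFinset.mp hx)).1
  · rw [Finset.card_image_of_injOn, hcard]
    intro x hx y hy hxy
    have h1 := (hφ x (Set.mem_toFinset.mp hx)).2
    have h2 := (hφ y (Set.mem_toFinset.mp hy)).2
    rw [← h1, ← h2, hxy]
  · intro σ
    have h1 : t ⊆ Dv p '' ((t.toFinset.image φ : Finset (Fin (δ + 1))) :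
        Set (Fin (δ + 1))) := by
      intro x hx
      refine ⟨φ x, ?_, (hφ x hx).2⟩
      simp only [Finset.coe_image, Set.mem_image, Finset.mem_coe, Set.mem_toFinset]
      exact ⟨x, hx, rfl⟩
    have h2 : Dv p σ ∈ Submodule.span ℝ t := by
      rw [htspan]
      exact Submodule.subset_span (Set.mem_range_self σ)
    exact Submodule.span_mono h1 h2


/-! ### The analytic estimate -/

noncomputable def bb (a : (Fin d → ℤ) → ℂ) (k : Fin d → ℤ) : ℝ≥0∞ := (‖a k‖₊ : ℝ≥0∞)

noncomputable def cprod (a : (Fin d → ℤ) → ℂ) (δ : ℕ) (p : PT d δ) : ℝ≥0∞ :=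
  ∏ σ : Fin (δ + 1), bb a (p.2 σ + p.1.1) * bb a (p.2 σ)

noncomputable def gg (a : (Fin d → ℤ) → ℂ) (δ : ℕ) (m : Fin (δ + 1) → (Fin d → ℤ)) : ℝ≥0∞ :=
  ∏ σ : Fin (δ + 1), (bb a (m σ)) ^ 2

lemma amgm_pointwise (a : (Fin d → ℤ) → ℂ) (τ₁ : Fin (δ + 1)) (p : PT d δ) :
    2 * cprod a δ p ≤ gg a δ (I1 τ₁ p) + gg a δ (I2 τ₁ p) := by
  have hAB : cprod a δ p
      = (∏ σ : Fin (δ + 1), bb a (I1 τ₁ p σ)) * ∏ σ : Fin (δ + 1), bb a (I2 τ₁ p σ) := by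
    rw [← Finset.prod_mul_distrib]
    refine Finset.prod_congr rfl fun σ _ => ?_
    by_cases h : σ = τ₁
    · simp [I1, I2, h]
    · simp [I1, I2, h, mul_comm]
  have h1 : gg a δ (I1 τ₁ p) = (∏ σ : Fin (δ + 1), bb a (I1 τ₁ p σ)) ^ 2 := by
    rw [gg, ← Finset.prod_pow]
  have h2 : gg a δ (I2 τ₁ p) = (∏ σ : Fin (δ + 1), bb a (I2 τ₁ p σ)) ^ 2 := by
    rw [gg, ← Finset.prod_pow]
  rw [hAB, h1, h2]
  exact enn_amgm _ _

lemma tsum_ite_comp_le {ι κ : Type*} (C : ι → Prop) (I : ι → κ) (g : κ → ℝ≥0∞)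
    (F : ι → ℝ≥0∞) (hF0 : ∀ p, ¬ C p → F p = 0) (hFg : ∀ p, C p → F p = g (I p))
    (hinj : ∀ p p', C p → C p' → I p = I p' → p = p') :
    ∑' p : ι, F p ≤ ∑' m : κ, g m := by
  have h1 : ∑' p : ι, F p = ∑' q : {p : ι // C p}, g (I q.1) := by
    have h2 := tsum_subtype_eq_of_support_subset
      (f := F) (s := {p | C p})
      (Function.support_subset_iff'.mpr fun p hp => hF0 p hp)
    rw [← h2]
    exact tsum_congr fun q => hFg q.1 q.2
  rw [h1]
  exact ENNReal.tsum_comp_le_tsum_of_injective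
    (fun q q' h => Subtype.ext (hinj _ _ q.2 q'.2 h)) g

lemma perS (hr : r < δ) (a : (Fin d → ℤ) → ℂ) (S : Finset (Fin (δ + 1)))
    (hsub : S ⊆ ({0}ᶜ : Finset (Fin (δ + 1)))) (hcard : S.card = r) :
    ∑' p : PT d δ, (if Cond d δ r p ∧ good S p then cprod a δ p else 0)
      ≤ (∑' k : Fin d → ℤ, (bb a k) ^ 2) ^ (δ + 1) := by
  have hex : ∃ τ : Fin (δ + 1), τ ∉ insert 0 S := by
    by_contra h
    push_neg at h
    have he : insert (0 : Fin (δ + 1)) S = Finset.univ := Finset.eq_univ_iff_forall.mpr h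
    have hc := congrArg Finset.card he
    rw [Finset.card_univ, Fintype.card_fin] at hc
    have hle := Finset.card_insert_le (0 : Fin (δ + 1)) S
    omega
  obtain ⟨τ₁, hτ₁⟩ := hex
  have hτ0 : τ₁ ≠ 0 := fun h => hτ₁ (h ▸ Finset.mem_insert_self 0 S)
  have hτS : τ₁ ∉ S := fun h => hτ₁ (Finset.mem_insert_of_mem h)
  set N := ∑' k : Fin d → ℤ, (bb a k) ^ 2 with hN
  have hgg : ∑' m : Fin (δ + 1) → (Fin d → ℤ), gg a δ m = N ^ (δ + 1) := by
    rw [hN]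
    exact tsum_pi_pow (δ + 1) (fun k => (bb a k) ^ 2)
  have hg1 : ∑' p : PT d δ, (if Cond d δ r p ∧ good S p then gg a δ (I1 τ₁ p) else 0)
      ≤ N ^ (δ + 1) := by
    refine le_trans (tsum_ite_comp_le (fun p => Cond d δ r p ∧ good S p) (I1 τ₁)
      (gg a δ) _ (fun p hp => if_neg hp) (fun p hp => if_pos hp) ?_) (le_of_eq hgg)
    intro p p' hp hp' h
    exact I1_inj S τ₁ hτ0 hτS ⟨hp.1.2.1, hp.2⟩ ⟨hp'.1.2.1, hp'.2⟩ h
  have hg2 : ∑' p : PT d δ, (if Cond d δ r p ∧ good S p then gg a δ (I2 τ₁ p) else 0)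
      ≤ N ^ (δ + 1) := by
    refine le_trans (tsum_ite_comp_le (fun p => Cond d δ r p ∧ good S p) (I2 τ₁)
      (gg a δ) _ (fun p hp => if_neg hp) (fun p hp => if_pos hp) ?_) (le_of_eq hgg)
    intro p p' hp hp' h
    exact I2_inj S τ₁ hτ0 hτS ⟨hp.1.2.1, hp.2⟩ ⟨hp'.1.2.1, hp'.2⟩ h
  have hpt : ∀ p : PT d δ,
      2 * (if Cond d δ r p ∧ good S p then cprod a δ p else 0)
        ≤ (if Cond d δ r p ∧ good S p then gg a δ (I1 τ₁ p) else 0)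
          + (if Cond d δ r p ∧ good S p then gg a δ (I2 τ₁ p) else 0) := by
    intro p
    by_cases h : Cond d δ r p ∧ good S p
    · simp only [if_pos h]
      exact amgm_pointwise a τ₁ p
    · simp [h]
  have hchain : 2 * ∑' p : PT d δ, (if Cond d δ r p ∧ good S p then cprod a δ p else 0)
      ≤ 2 * N ^ (δ + 1) := by
    calc 2 * ∑' p : PT d δ, (if Cond d δ r p ∧ good S p then cprod a δ p else 0)
        = ∑' p : PT d δ, 2 * (if Cond d δ r p ∧ good S p then cprod a δ p else 0) :=
          ENNReal.tsum_mul_left.symm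
      _ ≤ ∑' p : PT d δ,
            ((if Cond d δ r p ∧ good S p then gg a δ (I1 τ₁ p) else 0)
              + (if Cond d δ r p ∧ good S p then gg a δ (I2 τ₁ p) else 0)) :=
          ENNReal.tsum_le_tsum hpt
      _ = (∑' p : PT d δ, (if Cond d δ r p ∧ good S p then gg a δ (I1 τ₁ p) else 0))
            + ∑' p : PT d δ, (if Cond d δ r p ∧ good S p then gg a δ (I2 τ₁ p) else 0) :=
          ENNReal.tsum_add
      _ ≤ N ^ (δ + 1) + N ^ (δ + 1) := add_le_add hg1 hg2
      _ = 2 * N ^ (δ + 1) := (two_mul _).symm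
  exact (ENNReal.mul_le_mul_iff_right two_ne_zero ENNReal.ofNat_ne_top).mp hchain

/-- The master ENNReal estimate. -/
lemma master (hr : r < δ) (a : (Fin d → ℤ) → ℂ) :
    ∑' p : PT d δ, (if Cond d δ r p then cprod a δ p else 0)
      ≤ (δ.choose r : ℝ≥0∞) * (∑' k : Fin d → ℤ, (bb a k) ^ 2) ^ (δ + 1) := by
  classical
  set 𝒮 := Finset.powersetCard r ({0}ᶜ : Finset (Fin (δ + 1))) with h𝒮
  have hpt : ∀ p : PT d δ, (if Cond d δ r p then cprod a δ p else 0)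
      ≤ ∑ S ∈ 𝒮, (if Cond d δ r p ∧ good S p then cprod a δ p else 0) := by
    intro p
    by_cases h : Cond d δ r p
    · obtain ⟨S₀, hsub, hcard, hgood⟩ := exists_good (r := r) h.2.2
      have hmem : S₀ ∈ 𝒮 := Finset.mem_powersetCard.mpr ⟨hsub, hcard⟩
      have : (if Cond d δ r p then cprod a δ p else 0)
          = (if Cond d δ r p ∧ good S₀ p then cprod a δ p else 0) := by
        rw [if_pos h, if_pos ⟨h, hgood⟩]
      rw [this]
      exact Finset.single_le_sum (f := fun S => if Cond d δ r p ∧ good S p then cprod a δ p else 0)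
        (fun S _ => zero_le) hmem
    · simp [h]
  calc ∑' p : PT d δ, (if Cond d δ r p then cprod a δ p else 0)
      ≤ ∑' p : PT d δ, ∑ S ∈ 𝒮, (if Cond d δ r p ∧ good S p then cprod a δ p else 0) :=
        ENNReal.tsum_le_tsum hpt
    _ = ∑ S ∈ 𝒮, ∑' p : PT d δ, (if Cond d δ r p ∧ good S p then cprod a δ p else 0) :=
        Summable.tsum_finsetSum fun _ _ => ENNReal.summable
    _ ≤ ∑ S ∈ 𝒮, (∑' k : Fin d → ℤ, (bb a k) ^ 2) ^ (δ + 1) := by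
        refine Finset.sum_le_sum fun S hS => ?_
        obtain ⟨hsub, hcard⟩ := Finset.mem_powersetCard.mp hS
        exact perS hr a S hsub hcard
    _ = (δ.choose r : ℝ≥0∞) * (∑' k : Fin d → ℤ, (bb a k) ^ 2) ^ (δ + 1) := by
        rw [Finset.sum_const, nsmul_eq_mul]
        congr 1
        rw [h𝒮, Finset.card_powersetCard, Finset.card_compl, Finset.card_singleton,
          Fintype.card_fin]
        simp

end TsumAux

open TsumAux
open scoped ENNReal NNReal

/-- Lemma 1: `T_{r,δ}(u) ≤ binom(δ,r) ‖u‖^{2(δ+1)}`. -/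
theorem Tsum_le (d δ r : ℕ) (hd : 1 ≤ d) (hδ : 1 ≤ δ) (hδd : δ ≤ d) (hr : r < δ)
    (a : (Fin d → ℤ) → ℂ) (ha : Summable fun k : Fin d → ℤ => ‖a k‖ ^ 2) :
    (Summable fun p : ((Fin d → ℤ) × ℤ) × (Fin (δ + 1) → (Fin d → ℤ)) =>
        if p.1.1 ≠ 0 ∧ (∀ σ, p.2 σ ∈ Hplane p.1.1 p.1.2) ∧ spanDim (Set.range p.2) = r
        then ∏ σ : Fin (δ + 1), ‖a (p.2 σ + p.1.1)‖ * ‖a (p.2 σ)‖ else 0) ∧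
      Tsum d δ r a ≤ (δ.choose r : ℝ) * (∑' k : Fin d → ℤ, ‖a k‖ ^ 2) ^ (δ + 1) := by
  classical
  set np : PT d δ → ℝ≥0 := fun p =>
    if p.1.1 ≠ 0 ∧ (∀ σ, p.2 σ ∈ Hplane p.1.1 p.1.2) ∧ spanDim (Set.range p.2) = r
    then ∏ σ : Fin (δ + 1), ‖a (p.2 σ + p.1.1)‖₊ * ‖a (p.2 σ)‖₊ else 0 with hnp
  have hnp_real : ∀ p : PT d δ, ((np p : ℝ))
      = (if p.1.1 ≠ 0 ∧ (∀ σ, p.2 σ ∈ Hplane p.1.1 p.1.2) ∧ spanDim (Set.range p.2) = r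
        then ∏ σ : Fin (δ + 1), ‖a (p.2 σ + p.1.1)‖ * ‖a (p.2 σ)‖ else 0) := by
    intro p
    by_cases h : p.1.1 ≠ 0 ∧ (∀ σ, p.2 σ ∈ Hplane p.1.1 p.1.2) ∧ spanDim (Set.range p.2) = r
    · simp only [hnp, if_pos h]
      push_cast
      rfl
    · simp only [hnp, if_neg h]
      simp
  have hnp_enn : ∀ p : PT d δ, ((np p : ℝ≥0∞))
      = (if Cond d δ r p then cprod a δ p else 0) := by
    intro p
    by_cases h : p.1.1 ≠ 0 ∧ (∀ σ, p.2 σ ∈ Hplane p.1.1 p.1.2) ∧ spanDim (Set.range p.2) = r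
    · rw [hnp]
      simp only [if_pos h]
      rw [if_pos (show Cond d δ r p from h), cprod]
      push_cast
      rfl
    · rw [hnp]
      simp only [if_neg h]
      rw [if_neg (show ¬ Cond d δ r p from h)]
      simp
  have hsnn : Summable fun k : Fin d → ℤ => (‖a k‖₊ ^ 2 : ℝ≥0) := by
    apply NNReal.summable_coe.mp
    refine ha.congr fun k => ?_
    push_cast
    rfl
  have hNenn : (∑' k : Fin d → ℤ, (bb a k) ^ 2)
      = ((∑' k : Fin d → ℤ, (‖a k‖₊ ^ 2 : ℝ≥0) : ℝ≥0) : ℝ≥0∞) := by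
    rw [ENNReal.coe_tsum hsnn]
    refine tsum_congr fun k => ?_
    rw [bb]
    push_cast
    rfl
  have hNne : (∑' k : Fin d → ℤ, (bb a k) ^ 2) ≠ ⊤ := by
    rw [hNenn]; exact ENNReal.coe_ne_top
  have hNreal : (∑' k : Fin d → ℤ, (bb a k) ^ 2).toReal = ∑' k : Fin d → ℤ, ‖a k‖ ^ 2 := by
    rw [hNenn, ENNReal.coe_toReal, NNReal.coe_tsum]
    refine tsum_congr fun k => ?_
    push_cast
    rfl
  have hmain : ∑' p : PT d δ, ((np p : ℝ≥0∞))
      ≤ (δ.choose r : ℝ≥0∞) * (∑' k : Fin d → ℤ, (bb a k) ^ 2) ^ (δ + 1) := by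
    calc ∑' p : PT d δ, ((np p : ℝ≥0∞))
        = ∑' p : PT d δ, (if Cond d δ r p then cprod a δ p else 0) := tsum_congr hnp_enn
      _ ≤ _ := master hr a
  have hRne : (δ.choose r : ℝ≥0∞) * (∑' k : Fin d → ℤ, (bb a k) ^ 2) ^ (δ + 1) ≠ ⊤ :=
    ENNReal.mul_ne_top (ENNReal.natCast_ne_top _) (ENNReal.pow_ne_top hNne)
  have hne : ∑' p : PT d δ, ((np p : ℝ≥0∞)) ≠ ⊤ := ne_top_of_le_ne_top hRne hmain
  have hsum_np : Summable np := ENNReal.tsum_coe_ne_top_iff_summable.mp hne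
  have hsummable : Summable fun p : PT d δ =>
      (if p.1.1 ≠ 0 ∧ (∀ σ, p.2 σ ∈ Hplane p.1.1 p.1.2) ∧ spanDim (Set.range p.2) = r
        then ∏ σ : Fin (δ + 1), ‖a (p.2 σ + p.1.1)‖ * ‖a (p.2 σ)‖ else 0) :=
    (NNReal.summable_coe.mpr hsum_np).congr hnp_real
  refine ⟨hsummable, ?_⟩
  have hT : Tsum d δ r a = ((∑' p : PT d δ, np p : ℝ≥0) : ℝ) := by
    rw [Tsum, NNReal.coe_tsum]
    exact (tsum_congr hnp_real).symm
  have hTe : ((∑' p : PT d δ, np p : ℝ≥0) : ℝ)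
      = (∑' p : PT d δ, ((np p : ℝ≥0∞))).toReal := by
    rw [← ENNReal.coe_tsum hsum_np, ENNReal.coe_toReal]
  rw [hT, hTe]
  calc (∑' p : PT d δ, ((np p : ℝ≥0∞))).toReal
      ≤ ((δ.choose r : ℝ≥0∞) * (∑' k : Fin d → ℤ, (bb a k) ^ 2) ^ (δ + 1)).toReal :=
        ENNReal.toReal_mono hRne hmain
    _ = (δ.choose r : ℝ) * (∑' k : Fin d → ℤ, ‖a k‖ ^ 2) ^ (δ + 1) := by
        rw [ENNReal.toReal_mul, ENNReal.toReal_pow, hNreal, ENNReal.toReal_natCast]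
end
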